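/- If X is a homogeneous compact linearly ordered topological space, then every compact subset of X has an ω^op-like neighborhood base; i.e., χ_K Nt(X) = ω. -/

import Mathlib

open Cardinal

/-- `A` is a neighborhood base of the set `E` in `X`. -/
def IsNbhdBase (X : Type u) [TopologicalSpace X] (E : Set X) (A : Set (Set X)) : Prop :=
  (∀ u ∈ A, IsOpen u ∧ E ⊆ u) ∧ ∀ v : Set X, IsOpen v → E ⊆ v → ∃ u ∈ A, u ⊆ v

open Set Filter Topology

section Aux

variable {X : Type u} [LinearOrder X] [TopologicalSpace X] [OrderTopology X] [CompactSpace X]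

/-- In a homogeneous compact linearly ordered space, every point has a countably
generated neighborhood filter (i.e. the space is first countable). -/
lemma nhds_ctblyGen_of_homog (hhomog : ∀ x y : X, ∃ h : X ≃ₜ X, h x = y) (x : X) :
    (𝓝 x).IsCountablyGenerated := by
  classical
  obtain ⟨p0, -, hp0l'⟩ := (isCompact_univ : IsCompact (univ : Set X)).exists_isLeast ⟨x, trivial⟩
  have hp0l : ∀ y : X, p0 ≤ y := fun y => hp0l' trivial
  suffices hc : (𝓝 p0).IsCountablyGenerated by
    obtain ⟨h, hh⟩ := hhomog x p0
    have h2 : Filter.comap h (𝓝 p0) = 𝓝 x := by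
      rw [← hh, h.comap_nhds_eq, h.symm_apply_apply]
    rw [← h2]
    exact Filter.comap.isCountablyGenerated _ _
  by_contra hnc
  have hns : {p0} ∉ 𝓝 p0 := by
    intro h
    refine hnc ?_
    have : 𝓝 p0 = 𝓟 {p0} := le_antisymm (le_principal_iff.2 h)
      (by simpa [Filter.principal_singleton] using pure_le_nhds p0)
    rw [this]
    exact Filter.isCountablyGenerated_principal _
  have hIoo : ∀ c, p0 < c → ∃ d, p0 < d ∧ d < c := by
    intro c hc
    by_contra he
    push_neg at he
    apply hns
    have hIic : Iio c = {p0} := by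
      ext z
      simp only [mem_Iio, mem_singleton_iff]
      constructor
      · intro hz
        rcases eq_or_lt_of_le (hp0l z) with h | h
        · exact h.symm
        · exact absurd hz (not_lt.2 (he z h))
      · rintro rfl; exact hc
    have : ({p0} : Set X) ∈ 𝓝 p0 := by
      rw [← hIic]
      exact isOpen_Iio.mem_nhds hc
    exact this
  have hy0 : ∃ y, p0 < y := by
    by_contra h
    push_neg at h
    apply hns
    have : ({p0} : Set X) = Set.univ := by
      ext z
      simp only [mem_singleton_iff, mem_univ, iff_true]
      exact le_antisymm (hp0l z) (h z) |>.symm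
    rw [this]; exact univ_mem
  obtain ⟨y0, hy0⟩ := hy0
  choose st h1 h2 using hIoo
  let xs : ℕ → {c : X // p0 < c} := fun n =>
    Nat.rec ⟨y0, hy0⟩ (fun _ c => ⟨st c.1 c.2, h1 c.1 c.2⟩) n
  set xt : ℕ → X := fun n => (xs n).1 with hxt
  have hxp : ∀ n, p0 < xt n := fun n => (xs n).2
  have hxdec : ∀ n, xt (n + 1) < xt n := fun n => h2 _ _
  have hLeq : {y : X | ∀ n, y ≤ xt n} = ⋂ n, Iic (xt n) := by
    ext z; simp [mem_iInter]
  have hLclosed : IsClosed {y : X | ∀ n, y ≤ xt n} := by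
    rw [hLeq]; exact isClosed_iInter fun n => isClosed_Iic
  obtain ⟨xx, hxxL, hxxub⟩ :=
    hLclosed.isCompact.exists_isGreatest ⟨p0, fun n => hp0l _⟩
  have hxxlt : ∀ n, xx < xt n := fun n => lt_of_le_of_lt (hxxL (n + 1)) (hxdec n)
  have hcoi : ∀ b, xx < b → ∃ n, xt n < b := by
    intro b hb
    by_contra h
    push_neg at h
    exact absurd (hxxub (fun n => h n)) (not_le.2 hb)
  rcases eq_or_lt_of_le (hp0l xx) with hxx0 | hxx0
  · -- xx = p0 : countable base at p0
    apply hnc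
    have hb : (𝓝 p0).HasBasis (fun _ : ℕ => True) (fun n => Iio (xt n)) := by
      rw [Filter.hasBasis_iff]
      intro t
      constructor
      · intro ht
        obtain ⟨b, hb1, hb2⟩ := exists_Ico_subset_of_mem_nhds ht ⟨xt 0, hxx0 ▸ hxxlt 0⟩
        obtain ⟨n, hn⟩ := hcoi b (hxx0 ▸ hb1)
        exact ⟨n, trivial, fun z hz => hb2 ⟨hp0l z, lt_trans hz hn⟩⟩
      · rintro ⟨n, -, hn⟩
        exact mem_of_superset (isOpen_Iio.mem_nhds (hxx0 ▸ hxxlt n)) hn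
    exact hb.isCountablyGenerated
  · -- p0 < xx
    obtain ⟨hom, hhom⟩ := hhomog p0 xx
    have hCn : ∀ n : ℕ, ∃ b, p0 < b ∧ hom '' Iio b ⊆ Iio (xt n) := by
      intro n
      have hW : hom ⁻¹' Iio (xt n) ∈ 𝓝 p0 := by
        apply hom.continuous.continuousAt.preimage_mem_nhds
        rw [hhom]
        exact isOpen_Iio.mem_nhds (hxxlt n)
      obtain ⟨b, hb1, hb2⟩ := exists_Ico_subset_of_mem_nhds hW ⟨xx, hxx0⟩
      exact ⟨b, hb1, by rintro _ ⟨z, hz, rfl⟩; exact hb2 ⟨hp0l z, hz⟩⟩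
    choose bs hbs1 hbs2 using hCn
    have hCmem : ∀ n, hom '' Iio (bs n) ∈ 𝓝 xx :=
      fun n => (hom.isOpen_image.2 isOpen_Iio).mem_nhds ⟨p0, hbs1 n, hhom⟩
    have han : ∀ n, ∃ a, a < xx ∧ Ioc a xx ⊆ hom '' Iio (bs n) := fun n =>
      exists_Ioc_subset_of_mem_nhds (hCmem n) ⟨p0, hxx0⟩
    choose as has1 has2 using han
    by_cases hcof : ∀ c, c < xx → ∃ k, c ≤ as k
    · -- countable base at xx
      apply hnc
      have hb : (𝓝 xx).HasBasis (fun _ : ℕ × ℕ => True)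
          (fun q => Ioo (as q.1) (xt q.2)) := by
        rw [Filter.hasBasis_iff]
        intro t
        constructor
        · intro ht
          obtain ⟨a', ha1, ha2⟩ := exists_Ioc_subset_of_mem_nhds ht ⟨p0, hxx0⟩
          obtain ⟨b', hb1', hb2'⟩ := exists_Ico_subset_of_mem_nhds ht ⟨xt 0, hxxlt 0⟩
          obtain ⟨k, hk⟩ := hcof a' ha1
          obtain ⟨n, hn⟩ := hcoi b' hb1'
          refine ⟨(k, n), trivial, ?_⟩
          rintro z ⟨hz1, hz2⟩
          rcases le_or_gt z xx with h | h
          · exact ha2 ⟨lt_of_le_of_lt hk hz1, h⟩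
          · exact hb2' ⟨le_of_lt h, lt_trans hz2 hn⟩
        · rintro ⟨⟨k, n⟩, -, hq⟩
          exact mem_of_superset (isOpen_Ioo.mem_nhds ⟨has1 k, hxxlt n⟩) hq
      have h3 : (𝓝 xx).IsCountablyGenerated := hb.isCountablyGenerated
      have hsp : hom.symm xx = p0 := by rw [← hhom, hom.symm_apply_apply]
      have h2 : Filter.comap hom (𝓝 xx) = 𝓝 p0 := by rw [hom.comap_nhds_eq, hsp]
      rw [← h2]
      exact Filter.comap.isCountablyGenerated _ _
    · push_neg at hcof
      obtain ⟨c, hcxx, hca⟩ := hcof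
      have hv : hom ⁻¹' Ioo c (xt 0) ∈ 𝓝 p0 := by
        apply hom.continuous.continuousAt.preimage_mem_nhds
        rw [hhom]
        exact isOpen_Ioo.mem_nhds ⟨hcxx, hxxlt 0⟩
      obtain ⟨b', hb'1, hb'2⟩ := exists_Ico_subset_of_mem_nhds hv ⟨xx, hxx0⟩
      set U := hom '' Iio b' with hU
      have hUv : U ⊆ Ioo c (xt 0) := by rintro _ ⟨z, hz, rfl⟩; exact hb'2 ⟨hp0l z, hz⟩
      have hUsub : ∀ n, U ⊆ Iio (xt n) := by
        intro n
        rcases le_total b' (bs n) with h | h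
        · exact (image_mono (f := hom) (Iio_subset_Iio h)).trans (hbs2 n)
        · exfalso
          have hcU : c ∈ U :=
            image_mono (f := hom) (Iio_subset_Iio h) (has2 n ⟨hca n, le_of_lt hcxx⟩)
          exact lt_irrefl c (hUv hcU).1
      have hUmem : U ∈ 𝓝 xx := (hom.isOpen_image.2 isOpen_Iio).mem_nhds ⟨p0, hb'1, hhom⟩
      obtain ⟨b'', hb''1, hb''2⟩ := exists_Ico_subset_of_mem_nhds hUmem ⟨xt 0, hxxlt 0⟩
      obtain ⟨n, hn⟩ := hcoi b'' hb''1
      exact absurd (hb''2 ⟨le_of_lt (hxxlt n), hn⟩) fun h => lt_irrefl _ (hUsub n h)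

/-- Inside any open set of a linearly ordered space, each point has an open
order-connected neighborhood. -/
lemma exists_ordConnected_nbhd {O : Set X} (hO : IsOpen O) {z : X} (hz : z ∈ O) :
    ∃ V : Set X, IsOpen V ∧ z ∈ V ∧ V ⊆ O ∧ V.OrdConnected := by
  have hmem : O ∈ 𝓝 z := hO.mem_nhds hz
  by_cases hl : ∃ l, l < z
  · obtain ⟨a, ha, haO⟩ := exists_Ioc_subset_of_mem_nhds hmem hl
    by_cases hu : ∃ r, z < r
    · obtain ⟨b, hb, hbO⟩ := exists_Ico_subset_of_mem_nhds hmem hu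
      refine ⟨Ioo a b, isOpen_Ioo, ⟨ha, hb⟩, ?_, ordConnected_Ioo⟩
      rintro w ⟨hw1, hw2⟩
      rcases le_or_gt w z with h | h
      · exact haO ⟨hw1, h⟩
      · exact hbO ⟨le_of_lt h, hw2⟩
    · push_neg at hu
      refine ⟨Ioi a, isOpen_Ioi, ha, ?_, ordConnected_Ioi⟩
      intro w hw
      exact haO ⟨hw, hu w⟩
  · push_neg at hl
    by_cases hu : ∃ r, z < r
    · obtain ⟨b, hb, hbO⟩ := exists_Ico_subset_of_mem_nhds hmem hu
      refine ⟨Iio b, isOpen_Iio, hb, ?_, ordConnected_Iio⟩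
      intro w hw
      exact hbO ⟨hl w, hw⟩
    · push_neg at hu
      refine ⟨univ, isOpen_univ, trivial, fun w _ => ?_, ordConnected_univ⟩
      have : w = z := le_antisymm (hu w) (hl w)
      rw [this]; exact hz

/-- A monotone sequence in `D` which is cofinal in `D`. -/
lemma cofinal_seq (hfc : ∀ z : X, (𝓝 z).IsCountablyGenerated) {D : Set X} (hD : D.Nonempty) :
    ∃ b : ℕ → X, (∀ n, b n ∈ D) ∧ Monotone b ∧ ∀ d ∈ D, ∃ n, d ≤ b n := by
  classical
  obtain ⟨s, hsmem, hsub'⟩ := (isClosed_closure (s := D)).isCompact.exists_isGreatest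
    ⟨hD.choose, subset_closure hD.choose_spec⟩
  have hub : ∀ d ∈ D, d ≤ s := fun d hd => hsub' (subset_closure hd)
  by_cases hsD : s ∈ D
  · exact ⟨fun _ => s, fun _ => hsD, monotone_const, fun d hd => ⟨0, hub d hd⟩⟩
  · haveI := hfc s
    obtain ⟨Us, hUs⟩ := (𝓝 s).exists_antitone_basis
    have hdn : ∀ n, ∃ d, d ∈ D ∧ d ∈ Us n := by
      intro n
      obtain ⟨d, hd1, hd2⟩ :=
        mem_closure_iff_nhds.1 hsmem (Us n) (hUs.toHasBasis.mem_of_mem trivial)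
      exact ⟨d, hd2, hd1⟩
    choose d hd1 hd2 using hdn
    set bm : ℕ → X := fun n => Nat.rec (d 0) (fun k c => max c (d (k + 1))) n with hbm
    have hsucc : ∀ k, bm (k + 1) = max (bm k) (d (k + 1)) := fun k => rfl
    have hbmD : ∀ n, bm n ∈ D := by
      intro n
      induction n with
      | zero => exact hd1 0
      | succ k ih =>
        rw [hsucc k]
        rcases max_choice (bm k) (d (k + 1)) with h | h <;> rw [h]
        · exact ih
        · exact hd1 _
    have hmono : Monotone bm := monotone_nat_of_le_succ (fun n => by
      rw [hsucc n]; exact le_max_left _ _)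
    have hdb : ∀ n, d n ≤ bm n := by
      intro n
      cases n with
      | zero => exact le_rfl
      | succ k => rw [hsucc k]; exact le_max_right _ _
    refine ⟨bm, hbmD, hmono, ?_⟩
    intro c hc
    have hclt : c < s := lt_of_le_of_ne (hub c hc) (fun h => hsD (h ▸ hc))
    have hIoi : Ioi c ∈ 𝓝 s := isOpen_Ioi.mem_nhds hclt
    obtain ⟨n, -, hn⟩ := hUs.toHasBasis.mem_iff.1 hIoi
    exact ⟨n, (le_of_lt (hn (hd2 n))).trans (hdb n)⟩

/-- An antitone sequence in `D` which is coinitial in `D`. -/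
lemma coinitial_seq (hfc : ∀ z : X, (𝓝 z).IsCountablyGenerated) {D : Set X} (hD : D.Nonempty) :
    ∃ a : ℕ → X, (∀ n, a n ∈ D) ∧ Antitone a ∧ ∀ d ∈ D, ∃ n, a n ≤ d := by
  classical
  obtain ⟨s, hsmem, hsub'⟩ := (isClosed_closure (s := D)).isCompact.exists_isLeast
    ⟨hD.choose, subset_closure hD.choose_spec⟩
  have hub : ∀ d ∈ D, s ≤ d := fun d hd => hsub' (subset_closure hd)
  by_cases hsD : s ∈ D
  · exact ⟨fun _ => s, fun _ => hsD, antitone_const, fun d hd => ⟨0, hub d hd⟩⟩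
  · haveI := hfc s
    obtain ⟨Us, hUs⟩ := (𝓝 s).exists_antitone_basis
    have hdn : ∀ n, ∃ d, d ∈ D ∧ d ∈ Us n := by
      intro n
      obtain ⟨d, hd1, hd2⟩ :=
        mem_closure_iff_nhds.1 hsmem (Us n) (hUs.toHasBasis.mem_of_mem trivial)
      exact ⟨d, hd2, hd1⟩
    choose d hd1 hd2 using hdn
    set bm : ℕ → X := fun n => Nat.rec (d 0) (fun k c => min c (d (k + 1))) n with hbm
    have hsucc : ∀ k, bm (k + 1) = min (bm k) (d (k + 1)) := fun k => rfl
    have hbmD : ∀ n, bm n ∈ D := by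
      intro n
      induction n with
      | zero => exact hd1 0
      | succ k ih =>
        rw [hsucc k]
        rcases min_choice (bm k) (d (k + 1)) with h | h <;> rw [h]
        · exact ih
        · exact hd1 _
    have hmono : Antitone bm := antitone_nat_of_succ_le (fun n => by
      rw [hsucc n]; exact min_le_left _ _)
    have hdb : ∀ n, bm n ≤ d n := by
      intro n
      cases n with
      | zero => exact le_rfl
      | succ k => rw [hsucc k]; exact min_le_right _ _
    refine ⟨bm, hbmD, hmono, ?_⟩
    intro c hc
    have hclt : s < c := lt_of_le_of_ne (hub c hc) (fun h => hsD (h ▸ hc))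
    have hIio : Iio c ∈ 𝓝 s := isOpen_Iio.mem_nhds hclt
    obtain ⟨n, -, hn⟩ := hUs.toHasBasis.mem_iff.1 hIio
    exact ⟨n, (hdb n).trans (le_of_lt (hn (hd2 n)))⟩

end Aux

/-- If `X` is a homogeneous compact linearly ordered topological space, then every
compact subset of `X` has an `ω`-op-like neighborhood base (no member contained in
infinitely many members); i.e. `χ_K Nt(X) = ω`. -/
theorem homogeneous_ordered_compactum_compactNt_omega {X : Type u} [LinearOrder X]
    [TopologicalSpace X] [OrderTopology X] [CompactSpace X]
    (hhomog : ∀ x y : X, ∃ h : X ≃ₜ X, h x = y)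
    (K : Set X) (hK : IsCompact K) :
    ∃ A : Set (Set X), IsNbhdBase X K A ∧ ∀ u ∈ A, {v | v ∈ A ∧ u ⊂ v}.Finite := by
  classical
  rcases K.eq_empty_or_nonempty with rfl | hKne
  · refine ⟨{∅}, ⟨?_, ?_⟩, ?_⟩
    · intro u hu
      rw [mem_singleton_iff] at hu
      subst hu
      exact ⟨isOpen_empty, subset_rfl⟩
    · intro v hv hKv
      exact ⟨∅, mem_singleton _, empty_subset v⟩
    · intro u hu
      refine Set.Finite.subset (finite_singleton ∅) ?_
      intro v hv
      exact hv.1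
  obtain ⟨k0, hk0⟩ := hKne
  have hfc : ∀ z : X, (𝓝 z).IsCountablyGenerated := nhds_ctblyGen_of_homog hhomog
  have hKcl : IsClosed K := hK.isClosed
  have hKo : IsOpen Kᶜ := hKcl.isOpen_compl
  -- components of the complement
  set C : X → Set X := fun y => {z | uIcc y z ⊆ Kᶜ} with hCdef
  have hCself : ∀ y ∈ Kᶜ, y ∈ C y := by
    intro y hy
    simp only [hCdef, mem_setOf_eq, uIcc_self, singleton_subset_iff]
    exact hy
  have hCsub : ∀ y, C y ⊆ Kᶜ := fun y z hz => hz right_mem_uIcc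
  have hCeq : ∀ y z, z ∈ C y → C y = C z := by
    intro y z hz
    ext w
    constructor
    · intro hw
      refine (uIcc_subset_uIcc_union_uIcc (b := y)).trans ?_
      exact union_subset (by rw [uIcc_comm]; exact hz) hw
    · intro hw
      refine (uIcc_subset_uIcc_union_uIcc (b := z)).trans ?_
      exact union_subset hz hw
  have hCoc : ∀ y, (C y).OrdConnected := by
    intro y
    constructor
    intro z1 hz1 z2 hz2 w hw
    have hw' : w ∈ uIcc z1 z2 := Icc_subset_uIcc hw
    refine (uIcc_subset_uIcc_union_uIcc (b := z1)).trans (union_subset hz1 ?_)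
    have h1 : uIcc z1 w ⊆ uIcc z1 z2 := uIcc_subset_uIcc left_mem_uIcc hw'
    have h2 : uIcc z1 z2 ⊆ Kᶜ := by
      have : z2 ∈ C z1 := (hCeq y z1 hz1) ▸ hz2
      exact this
    exact h1.trans h2
  have hCopen : ∀ y ∈ Kᶜ, IsOpen (C y) := by
    intro y hy
    rw [isOpen_iff_mem_nhds]
    intro z hz
    obtain ⟨V, hVo, hzV, hVsub, hVoc⟩ := exists_ordConnected_nbhd hKo (hCsub y hz)
    refine mem_of_superset (hVo.mem_nhds hzV) ?_
    intro w hw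
    have hwz : w ∈ C z := fun p hp => hVsub (hVoc.uIcc_subset hzV hw hp)
    exact (hCeq y z hz) ▸ hwz
  set Comp : Set (Set X) := {D | ∃ y ∈ Kᶜ, D = C y} with hCompDef
  have hCompEq : ∀ D ∈ Comp, ∀ E ∈ Comp, ∀ z, z ∈ D → z ∈ E → D = E := by
    rintro D ⟨y, hy, rfl⟩ E ⟨y', hy', rfl⟩ z hz hz'
    rw [hCeq y z hz, hCeq y' z hz']
  have hDsub : ∀ D ∈ Comp, D ⊆ Kᶜ := by
    rintro D ⟨y, hy, rfl⟩
    exact hCsub y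
  -- canonical exhaustions of each component
  have hexhD : ∀ D : Set X, ∃ ab : (ℕ → X) × (ℕ → X), D ∈ Comp →
      (∀ k, ab.1 k ∈ D) ∧ (∀ k, ab.2 k ∈ D) ∧ Antitone ab.1 ∧ Monotone ab.2 ∧
      (∀ k, ab.1 k ≤ ab.2 k) ∧ ∀ d ∈ D, ∃ k, ab.1 k ≤ d ∧ d ≤ ab.2 k := by
    intro D
    by_cases hD : D ∈ Comp
    · obtain ⟨y, hy, rfl⟩ := hD
      have hne : (C y).Nonempty := ⟨y, hCself y hy⟩
      obtain ⟨b, hb1, hb2, hb3⟩ := cofinal_seq hfc hne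
      obtain ⟨a, ha1, ha2, ha3⟩ := coinitial_seq hfc hne
      set p : X := hne.choose with hp
      have hpD : p ∈ C y := hne.choose_spec
      set a' : ℕ → X := fun k => min (a k) p with ha'
      set b' : ℕ → X := fun k => max (b k) p with hb'
      have h1' : ∀ k, a' k ∈ C y := by
        intro k
        rcases min_choice (a k) p with h | h <;>
          · show min (a k) p ∈ C y
            rw [h]
            first | exact ha1 k | exact hpD
      have h2' : ∀ k, b' k ∈ C y := by
        intro k
        rcases max_choice (b k) p with h | h <;>
          · show max (b k) p ∈ C y
            rw [h]
            first | exact hb1 k | exact hpD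
      have h3' : Antitone a' := fun i j hij => min_le_min (ha2 hij) le_rfl
      have h4' : Monotone b' := fun i j hij => max_le_max (hb2 hij) le_rfl
      have h5' : ∀ k, a' k ≤ b' k := fun k => (min_le_right (a k) p).trans (le_max_right (b k) p)
      have h6' : ∀ d ∈ C y, ∃ k, a' k ≤ d ∧ d ≤ b' k := by
        intro d hd
        obtain ⟨k1, hk1⟩ := ha3 d hd
        obtain ⟨k2, hk2⟩ := hb3 d hd
        refine ⟨max k1 k2, ?_, ?_⟩
        · exact le_trans (h3' (le_max_left k1 k2)) ((min_le_left _ _).trans hk1)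
        · exact le_trans hk2 (le_trans (le_max_left (b k2) p) (h4' (le_max_right k1 k2)))
      exact ⟨(a', b'), fun _ => ⟨h1', h2', h3', h4', h5', h6'⟩⟩
    · exact ⟨(fun _ => k0, fun _ => k0), fun h => absurd h hD⟩
  choose ab hab using hexhD
  set α : Set X → ℕ → X := fun D => (ab D).1 with hαdef
  set β : Set X → ℕ → X := fun D => (ab D).2 with hβdef
  have hα : ∀ D ∈ Comp, ∀ k, α D k ∈ D := fun D hD k => (hab D hD).1 k
  have hβ : ∀ D ∈ Comp, ∀ k, β D k ∈ D := fun D hD k => (hab D hD).2.1 k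
  have hαant : ∀ D ∈ Comp, Antitone (α D) := fun D hD => (hab D hD).2.2.1
  have hβmono : ∀ D ∈ Comp, Monotone (β D) := fun D hD => (hab D hD).2.2.2.1
  have hαβ : ∀ D ∈ Comp, ∀ k, α D k ≤ β D k := fun D hD => (hab D hD).2.2.2.2.1
  have hcofD : ∀ D ∈ Comp, ∀ d ∈ D, ∃ k, α D k ≤ d ∧ d ≤ β D k :=
    fun D hD => (hab D hD).2.2.2.2.2
  have hIccD : ∀ D ∈ Comp, ∀ m, Icc (α D m) (β D m) ⊆ D := by
    rintro D hD m
    obtain ⟨y, hy, rfl⟩ := hD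
    exact (hCoc y).out (hα _ ⟨y, hy, rfl⟩ m) (hβ _ ⟨y, hy, rfl⟩ m)
  -- the neighborhood base
  set A : Set (Set X) := {u | ∃ (s : Set (Set X)) (n : Set X → ℕ), s.Finite ∧ s ⊆ Comp ∧
      u = (⋃ D ∈ s, Icc (α D (n D)) (β D (n D)))ᶜ} with hAdef
  refine ⟨A, ⟨?_, ?_⟩, ?_⟩
  · -- members are open neighborhoods of K
    rintro u ⟨s, n, hsf, hsC, rfl⟩
    constructor
    · exact (hsf.isClosed_biUnion (fun D _ => isClosed_Icc)).isOpen_compl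
    · rw [subset_compl_comm]
      refine iUnion₂_subset fun D hD => ?_
      intro p hp
      exact hDsub D (hsC hD) (hIccD D (hsC hD) (n D) hp)
  · -- base property
    intro v hv hKv
    set G : Set X := vᶜ with hGdef
    have hGcl : IsClosed G := hv.isClosed_compl
    have hGK : G ⊆ Kᶜ := compl_subset_compl.2 hKv
    have hGcov : G ⊆ ⋃ i ∈ Kᶜ, C i := fun g hg =>
      mem_biUnion (hGK hg) (hCself g (hGK hg))
    obtain ⟨t, htsub, htfin, hcov⟩ :=
      hGcl.isCompact.elim_finite_subcover_image (fun i hi => hCopen i hi) hGcov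
    have himgC : ∀ D ∈ (C '' t : Set (Set X)), D ∈ Comp := by
      rintro D ⟨i, hit, rfl⟩
      exact ⟨i, htsub hit, rfl⟩
    -- bounds for G inside each component
    have hup : ∀ D ∈ Comp, ∃ d' ∈ D, ∀ g ∈ G ∩ D, g ≤ d' := by
      rintro D ⟨y, hy, rfl⟩
      by_contra hcon
      push_neg at hcon
      obtain ⟨s', hs'cl, hs'ub⟩ := (isClosed_closure (s := C y)).isCompact.exists_isGreatest
        ⟨y, subset_closure (hCself y hy)⟩
      have hubD : ∀ d ∈ C y, d ≤ s' := fun d hd => hs'ub (subset_closure hd)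
      by_cases hls : ∃ l, l < s'
      · have hscl2 : s' ∈ closure (G ∩ C y) := by
          rw [mem_closure_iff_nhds]
          intro w hw
          obtain ⟨a', ha'1, ha'2⟩ := exists_Ioc_subset_of_mem_nhds hw hls
          have hda : ∃ d ∈ C y, a' < d := by
            by_contra hda
            push_neg at hda
            have : s' ≤ a' := closure_minimal (fun z hz => hda z hz) isClosed_Iic hs'cl
            exact absurd this (not_le.2 ha'1)
          obtain ⟨d, hd, had⟩ := hda
          obtain ⟨g, hg, hdg⟩ := hcon d hd
          exact ⟨g, ha'2 ⟨lt_trans had hdg, hubD g hg.2⟩, hg⟩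
        have hsG : s' ∈ G := by
          have := closure_mono (inter_subset_left (s := G) (t := C y)) hscl2
          rwa [hGcl.closure_eq] at this
        have hsKc : s' ∈ Kᶜ := hGK hsG
        obtain ⟨z, hz1, hz2⟩ :=
          (_root_.mem_closure_iff.1 hs'cl) (C s') (hCopen s' hsKc) (hCself s' hsKc)
        have hDeq : C y = C s' := by rw [hCeq y z hz2, hCeq s' z hz1]
        have hs'D : s' ∈ C y := hDeq ▸ hCself s' hsKc
        obtain ⟨g, hg, hlt⟩ := hcon s' hs'D
        exact absurd (hubD g hg.2) (not_le.2 hlt)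
      · push_neg at hls
        have hyd : y ∈ C y := hCself y hy
        have hys : y = s' := le_antisymm (hubD y hyd) (hls y)
        obtain ⟨g, hg, hlt⟩ := hcon y hyd
        exact absurd (hubD g hg.2) (not_le.2 (hys ▸ hlt))
    have hlo : ∀ D ∈ Comp, ∃ e' ∈ D, ∀ g ∈ G ∩ D, e' ≤ g := by
      rintro D ⟨y, hy, rfl⟩
      by_contra hcon
      push_neg at hcon
      obtain ⟨s', hs'cl, hs'lb⟩ := (isClosed_closure (s := C y)).isCompact.exists_isLeast
        ⟨y, subset_closure (hCself y hy)⟩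
      have hlbD : ∀ d ∈ C y, s' ≤ d := fun d hd => hs'lb (subset_closure hd)
      by_cases hls : ∃ r, s' < r
      · have hscl2 : s' ∈ closure (G ∩ C y) := by
          rw [mem_closure_iff_nhds]
          intro w hw
          obtain ⟨b', hb'1, hb'2⟩ := exists_Ico_subset_of_mem_nhds hw hls
          have hda : ∃ d ∈ C y, d < b' := by
            by_contra hda
            push_neg at hda
            have : b' ≤ s' := closure_minimal (fun z hz => hda z hz) isClosed_Ici hs'cl
            exact absurd this (not_le.2 hb'1)
          obtain ⟨d, hd, had⟩ := hda
          obtain ⟨g, hg, hdg⟩ := hcon d hd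
          exact ⟨g, hb'2 ⟨hlbD g hg.2, lt_trans hdg had⟩, hg⟩
        have hsG : s' ∈ G := by
          have := closure_mono (inter_subset_left (s := G) (t := C y)) hscl2
          rwa [hGcl.closure_eq] at this
        have hsKc : s' ∈ Kᶜ := hGK hsG
        obtain ⟨z, hz1, hz2⟩ :=
          (_root_.mem_closure_iff.1 hs'cl) (C s') (hCopen s' hsKc) (hCself s' hsKc)
        have hDeq : C y = C s' := by rw [hCeq y z hz2, hCeq s' z hz1]
        have hs'D : s' ∈ C y := hDeq ▸ hCself s' hsKc
        obtain ⟨g, hg, hlt⟩ := hcon s' hs'D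
        exact absurd (hlbD g hg.2) (not_le.2 hlt)
      · push_neg at hls
        have hyd : y ∈ C y := hCself y hy
        have hys : y = s' := le_antisymm (hls y) (hlbD y hyd)
        obtain ⟨g, hg, hlt⟩ := hcon y hyd
        exact absurd (hlbD g hg.2) (not_le.2 (hys ▸ hlt))
    have hex : ∀ D ∈ Comp, ∃ m, G ∩ D ⊆ Icc (α D m) (β D m) := by
      intro D hD
      obtain ⟨d', hd'D, hd'⟩ := hup D hD
      obtain ⟨e', he'D, he'⟩ := hlo D hD
      obtain ⟨k1, hk1⟩ := hcofD D hD d' hd'D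
      obtain ⟨k2, hk2⟩ := hcofD D hD e' he'D
      refine ⟨max k1 k2, fun g hg => ⟨?_, ?_⟩⟩
      · exact le_trans (le_trans (hαant D hD (le_max_right k1 k2)) hk2.1) (he' g hg)
      · exact le_trans (hd' g hg) (le_trans hk1.2 (hβmono D hD (le_max_left k1 k2)))
    set nD : Set X → ℕ := fun D =>
      if h : ∃ m, G ∩ D ⊆ Icc (α D m) (β D m) then h.choose else 0 with hnDdef
    have hnD : ∀ D ∈ (C '' t : Set (Set X)), G ∩ D ⊆ Icc (α D (nD D)) (β D (nD D)) := by
      intro D hD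
      have h := hex D (himgC D hD)
      simp only [hnDdef]
      rw [dif_pos h]
      exact h.choose_spec
    refine ⟨(⋃ D ∈ (C '' t : Set (Set X)), Icc (α D (nD D)) (β D (nD D)))ᶜ,
      ⟨C '' t, nD, htfin.image C, himgC, rfl⟩, ?_⟩
    have hGsub : G ⊆ ⋃ D ∈ (C '' t : Set (Set X)), Icc (α D (nD D)) (β D (nD D)) := by
      intro g hg
      obtain ⟨i, hit, hgC⟩ := mem_iUnion₂.1 (hcov hg)
      exact mem_biUnion (mem_image_of_mem C hit)
        (hnD (C i) (mem_image_of_mem C hit) ⟨hg, hgC⟩)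
    have := compl_subset_compl.2 hGsub
    rwa [hGdef, compl_compl] at this
  · -- omega-op-likeness
    rintro u ⟨s, n, hsf, hsC, rfl⟩
    have hPiFin : (⋃ D ∈ s, (fun m => Icc (α D m) (β D m)) '' Iic (n D)).Finite :=
      hsf.biUnion (fun D _ => (finite_Iic (n D)).image _)
    refine Set.Finite.subset (hPiFin.finite_subsets.image (fun P : Set (Set X) => (⋃₀ P)ᶜ)) ?_
    rintro v ⟨hvA, huv⟩
    obtain ⟨s', n', hs'f, hs'C, rfl⟩ := hvA
    have hGF : (⋃ D ∈ s', Icc (α D (n' D)) (β D (n' D))) ⊆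
        ⋃ D ∈ s, Icc (α D (n D)) (β D (n D)) := compl_subset_compl.1 huv.subset
    refine ⟨(fun D => Icc (α D (n' D)) (β D (n' D))) '' s', ?_, ?_⟩
    · rintro P ⟨D', hD's', rfl⟩
      have hD'C : D' ∈ Comp := hs'C hD's'
      have hab' : α D' (n' D') ≤ β D' (n' D') := hαβ D' hD'C (n' D')
      have hzP : α D' (n' D') ∈ Icc (α D' (n' D')) (β D' (n' D')) := left_mem_Icc.2 hab'
      have hPF : Icc (α D' (n' D')) (β D' (n' D')) ⊆
          ⋃ D ∈ s, Icc (α D (n D)) (β D (n D)) :=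
        fun p hp => hGF (mem_biUnion hD's' hp)
      have hPD' : Icc (α D' (n' D')) (β D' (n' D')) ⊆ D' := hIccD D' hD'C (n' D')
      have hmemF : ∀ p ∈ Icc (α D' (n' D')) (β D' (n' D')),
          p ∈ Icc (α D' (n D')) (β D' (n D')) ∧ D' ∈ s := by
        intro p hp
        obtain ⟨E, hEs, hpE⟩ := mem_iUnion₂.1 (hPF hp)
        have hED : E = D' :=
          hCompEq E (hsC hEs) D' hD'C p (hIccD E (hsC hEs) (n E) hpE) (hPD' hp)
        exact ⟨hED ▸ hpE, hED ▸ hEs⟩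
      have hD's : D' ∈ s := (hmemF _ hzP).2
      have hPsub : Icc (α D' (n' D')) (β D' (n' D')) ⊆ Icc (α D' (n D')) (β D' (n D')) :=
        fun p hp => (hmemF p hp).1
      have hmex : ∃ m, m ≤ n D' ∧
          Icc (α D' m) (β D' m) = Icc (α D' (n' D')) (β D' (n' D')) := by
        rcases le_or_gt (n' D') (n D') with h | h
        · exact ⟨n' D', h, rfl⟩
        · obtain ⟨h1, h2⟩ := (Icc_subset_Icc_iff hab').1 hPsub
          have e1 : α D' (n D') = α D' (n' D') := le_antisymm h1 (hαant D' hD'C h.le)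
          have e2 : β D' (n D') = β D' (n' D') := le_antisymm (hβmono D' hD'C h.le) h2
          exact ⟨n D', le_rfl, by rw [e1, e2]⟩
      obtain ⟨m, hm, hPm⟩ := hmex
      exact mem_biUnion hD's ⟨m, hm, hPm⟩
    · show (⋃₀ ((fun D => Icc (α D (n' D)) (β D (n' D))) '' s'))ᶜ = _
      rw [sUnion_image]
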